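/- Let p ≥ 1, 0 ≤ k < 1, and let h : 𝔻 → ℂ be analytic with h(0) = 0. Suppose g : 𝔻 → ℂ is analytic with g(0) = 0 and |g'(z)| ≤ k|h'(z)| for all z ∈ 𝔻. Then for 0 < r < 1, M_p(r, h + conj(g)) ≤ (1 + k) ∫₀^r M_p(s, h') ds, where M_p(r,F) = ((1/2π)∫₀^{2π}|F(re^{iθ})|^p dθ)^{1/p}. -/

import Mathlib

open Complex Real Metric MeasureTheory

/-- The `p`-th integral mean of `F` on the circle of radius `r`. -/
noncomputable def Mp (p r : ℝ) (F : ℂ → ℂ) : ℝ :=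
  ((1 / (2 * π)) * ∫ θ in (0 : ℝ)..(2 * π), ‖F (r * Complex.exp (θ * Complex.I))‖ ^ p) ^ (1 / p)

instance fact_two_pi_pos : Fact (0 < 2 * π) := ⟨Real.two_pi_pos⟩

lemma expPeriodic : Function.Periodic (fun θ : ℝ => Complex.exp (θ * Complex.I)) (2 * π) := by
  intro x
  push_cast
  rw [add_mul, Complex.exp_add, Complex.exp_two_pi_mul_I, mul_one]

noncomputable def ce : C(AddCircle (2 * π), ℂ) := by
  refine ⟨expPeriodic.lift, ?_⟩
  rw [(QuotientAddGroup.isQuotientMap_mk _).continuous_iff]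
  have : (expPeriodic.lift ∘ (QuotientAddGroup.mk : ℝ → AddCircle (2 * π)))
      = fun θ : ℝ => Complex.exp (θ * Complex.I) := funext fun θ => expPeriodic.lift_coe θ
  rw [this]
  exact (Complex.continuous_ofReal.mul continuous_const).cexp

lemma ce_coe (θ : ℝ) : ce (θ : AddCircle (2 * π)) = Complex.exp (θ * Complex.I) :=
  expPeriodic.lift_coe θ

lemma norm_ce (x : AddCircle (2 * π)) : ‖ce x‖ = 1 := by
  induction x using QuotientAddGroup.induction_on with
  | H θ => rw [show ((θ : ℝ) : AddCircle (2 * π)) = ((θ : ℝ) : AddCircle (2 * π)) from rfl,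
      ce_coe, Complex.norm_exp_ofReal_mul_I]

lemma ftc_ray (f : ℂ → ℂ) (hf : DifferentiableOn ℂ f (ball (0 : ℂ) 1)) (hf0 : f 0 = 0)
    (c : ℂ) (hc : ‖c‖ = 1) {r : ℝ} (hr0 : 0 ≤ r) (hr1 : r < 1) :
    f ((r : ℂ) * c) = ∫ s in (0 : ℝ)..r, c * deriv f ((s : ℂ) * c) := by
  have hDf : ContinuousOn (deriv f) (ball (0 : ℂ) 1) :=
    ((hf.analyticOnNhd isOpen_ball).deriv).continuousOn
  have hmem : ∀ s ∈ Set.uIcc (0 : ℝ) r, ((s : ℂ) * c) ∈ ball (0 : ℂ) 1 := by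
    intro s hs
    rw [Set.uIcc_of_le hr0] at hs
    rw [mem_ball_zero_iff, norm_mul, hc, mul_one, Complex.norm_real, Real.norm_eq_abs,
      _root_.abs_of_nonneg hs.1]
    exact lt_of_le_of_lt hs.2 hr1
  have hd : ∀ s ∈ Set.uIcc (0 : ℝ) r,
      HasDerivAt (fun t : ℝ => f ((t : ℂ) * c)) (c * deriv f ((s : ℂ) * c)) s := by
    intro s hs
    have hm : HasDerivAt (fun t : ℝ => (t : ℂ) * c) c s := by
      simpa using (Complex.ofRealCLM.hasDerivAt (x := s)).mul_const c
    have hfd : HasDerivAt f (deriv f ((s : ℂ) * c)) ((s : ℂ) * c) :=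
      (hf.differentiableAt (isOpen_ball.mem_nhds (hmem s hs))).hasDerivAt
    have := HasDerivAt.scomp s hfd hm
    simpa [smul_eq_mul, Function.comp_def] using this
  have hint : IntervalIntegrable (fun s : ℝ => c * deriv f ((s : ℂ) * c))
      MeasureTheory.volume 0 r := by
    apply ContinuousOn.intervalIntegrable
    exact continuousOn_const.mul (hDf.comp
      ((Complex.continuous_ofReal.mul continuous_const).continuousOn) hmem)
  have := intervalIntegral.integral_eq_sub_of_hasDerivAt hd hint
  rw [this]
  simp [hf0]

lemma ftc_ray_norm (f : ℂ → ℂ) (hf : DifferentiableOn ℂ f (ball (0 : ℂ) 1)) (hf0 : f 0 = 0)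
    (c : ℂ) (hc : ‖c‖ = 1) {r : ℝ} (hr0 : 0 ≤ r) (hr1 : r < 1) :
    ‖f ((r : ℂ) * c)‖ ≤ ∫ s in (0 : ℝ)..r, ‖deriv f ((s : ℂ) * c)‖ := by
  rw [ftc_ray f hf hf0 c hc hr0 hr1]
  refine (intervalIntegral.norm_integral_le_integral_norm hr0).trans_eq ?_
  apply intervalIntegral.integral_congr
  intro s _
  simp [norm_mul, hc]

lemma deriv_ray_intble (f : ℂ → ℂ) (hDf : ContinuousOn (deriv f) (ball (0 : ℂ) 1))
    (c : ℂ) (hc : ‖c‖ = 1) {r : ℝ} (hr0 : 0 ≤ r) (hr1 : r < 1) :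
    IntervalIntegrable (fun s : ℝ => ‖deriv f ((s : ℂ) * c)‖) MeasureTheory.volume 0 r := by
  apply ContinuousOn.intervalIntegrable
  refine ContinuousOn.norm ?_
  refine hDf.comp ((Complex.continuous_ofReal.mul continuous_const).continuousOn) ?_
  intro s hs
  rw [Set.uIcc_of_le hr0] at hs
  rw [mem_ball_zero_iff, norm_mul, hc, mul_one, Complex.norm_real, Real.norm_eq_abs,
    _root_.abs_of_nonneg hs.1]
  exact lt_of_le_of_lt hs.2 hr1

lemma key_norm {E : Type*} [NormedAddCommGroup E] {p : ℝ} (hp : 1 ≤ p)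
    (f : C(AddCircle (2 * π), E)) :
    (eLpNorm f (ENNReal.ofReal p) MeasureTheory.volume).toReal
      = (∫ x : AddCircle (2 * π), ‖f x‖ ^ p) ^ (1 / p) := by
  have hp0 : 0 < p := lt_of_lt_of_le one_pos hp
  have hmem : MemLp (⇑f) (ENNReal.ofReal p) MeasureTheory.volume :=
    MemLp.of_bound f.continuous.aestronglyMeasurable ‖f‖
      (Filter.Eventually.of_forall fun x => f.norm_coe_le_norm x)
  rw [hmem.eLpNorm_eq_integral_rpow_norm (by simp [ENNReal.ofReal_eq_zero]; linarith)
    ENNReal.ofReal_ne_top]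
  simp only [ENNReal.toReal_ofReal hp0.le]
  rw [ENNReal.toReal_ofReal
    (Real.rpow_nonneg (integral_nonneg fun x => Real.rpow_nonneg (norm_nonneg _) _) _), one_div]

lemma Mp_eq {p : ℝ} (F : ℂ → ℂ) (r : ℝ) {E : Type*} [NormedAddCommGroup E]
    (f : C(AddCircle (2 * π), E))
    (hf : ∀ θ : ℝ, ‖f (θ : AddCircle (2 * π))‖ = ‖F ((r : ℂ) * Complex.exp ((θ : ℂ) * Complex.I))‖) :
    Mp p r F = (1 / (2 * π)) ^ (1 / p) * (∫ x : AddCircle (2 * π), ‖f x‖ ^ p) ^ (1 / p) := by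
  have h2 : (∫ θ in (0 : ℝ)..(2 * π), ‖F ((r : ℂ) * Complex.exp ((θ : ℂ) * Complex.I))‖ ^ p)
      = ∫ x : AddCircle (2 * π), ‖f x‖ ^ p := by
    rw [← AddCircle.intervalIntegral_preimage (2 * π) 0 (fun x => ‖f x‖ ^ p), zero_add]
    exact intervalIntegral.integral_congr fun θ _ => by rw [hf θ]
  rw [Mp, h2, Real.mul_rpow (by positivity)
    (integral_nonneg fun x => Real.rpow_nonneg (norm_nonneg _) _)]

theorem qc_integral_mean_bound (p k : ℝ) (hp : 1 ≤ p) (hk0 : 0 ≤ k) (hk1 : k < 1)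
    (h g : ℂ → ℂ) (hh : DifferentiableOn ℂ h (ball (0 : ℂ) 1))
    (hg : DifferentiableOn ℂ g (ball (0 : ℂ) 1))
    (hh0 : h 0 = 0) (hg0 : g 0 = 0)
    (hqc : ∀ z ∈ ball (0 : ℂ) 1, ‖deriv g z‖ ≤ k * ‖deriv h z‖) :
    ∀ r : ℝ, 0 < r → r < 1 →
      Mp p r (fun z => h z + (starRingEnd ℂ) (g z))
        ≤ (1 + k) * ∫ s in (0 : ℝ)..r, Mp p s (deriv h) := by
  intro r hr0 hr1
  have hp0 : 0 < p := lt_of_lt_of_le one_pos hp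
  set q : ENNReal := ENNReal.ofReal p with hqdef
  haveI : Fact (1 ≤ q) := ⟨by rw [hqdef]; exact ENNReal.one_le_ofReal.mpr hp⟩
  have hDh : ContinuousOn (deriv h) (ball (0 : ℂ) 1) :=
    ((hh.analyticOnNhd isOpen_ball).deriv).continuousOn
  have hDg : ContinuousOn (deriv g) (ball (0 : ℂ) 1) :=
    ((hg.analyticOnNhd isOpen_ball).deriv).continuousOn
  have hmemb : ∀ (t : ℝ), 0 ≤ t → t < 1 → ∀ x : AddCircle (2 * π),
      ((t : ℂ) * ce x) ∈ ball (0 : ℂ) 1 := by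
    intro t ht0 ht1 x
    rw [mem_ball_zero_iff, norm_mul, norm_ce, mul_one, Complex.norm_real, Real.norm_eq_abs,
      _root_.abs_of_nonneg ht0]
    exact ht1
  -- the boundary function
  have hFccont : Continuous fun x : AddCircle (2 * π) =>
      h ((r : ℂ) * ce x) + (starRingEnd ℂ) (g ((r : ℂ) * ce x)) := by
    have hi : Continuous fun x : AddCircle (2 * π) => (r : ℂ) * ce x :=
      continuous_const.mul ce.continuous
    have h1 : Continuous fun x : AddCircle (2 * π) => h ((r : ℂ) * ce x) :=
      hh.continuousOn.comp_continuous hi (fun x => hmemb r hr0.le hr1 x)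
    have h2 : Continuous fun x : AddCircle (2 * π) => g ((r : ℂ) * ce x) :=
      hg.continuousOn.comp_continuous hi (fun x => hmemb r hr0.le hr1 x)
    exact h1.add (continuous_star.comp h2)
  set Fc : C(AddCircle (2 * π), ℂ) := ⟨_, hFccont⟩ with hFcdef
  -- the family of radial slices of ‖deriv h‖
  haveI : CompactSpace (Set.Icc (0 : ℝ) r) := isCompact_iff_compactSpace.mp isCompact_Icc
  have hΨcont : Continuous fun y : (Set.Icc (0 : ℝ) r) × AddCircle (2 * π) =>
      ‖deriv h (((y.1 : ℝ) : ℂ) * ce y.2)‖ := by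
    have hi : Continuous fun y : (Set.Icc (0 : ℝ) r) × AddCircle (2 * π) =>
        (((y.1 : ℝ) : ℂ) * ce y.2) :=
      (Complex.continuous_ofReal.comp (continuous_subtype_val.comp continuous_fst)).mul
        (ce.continuous.comp continuous_snd)
    exact (hDh.comp_continuous hi
      (fun y => hmemb y.1 y.1.2.1 (lt_of_le_of_lt y.1.2.2 hr1) y.2)).norm
  set Ψ : C((Set.Icc (0 : ℝ) r) × AddCircle (2 * π), ℝ) := ⟨_, hΨcont⟩ with hΨdef
  set u : ℝ → C(AddCircle (2 * π), ℝ) :=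
    fun s => if hs : s ∈ Set.Icc (0 : ℝ) r then Ψ.curry ⟨s, hs⟩ else 0 with hudef
  have hu_apply : ∀ s, s ∈ Set.Icc (0 : ℝ) r → ∀ x, u s x = ‖deriv h ((s : ℂ) * ce x)‖ := by
    intro s hs x
    simp only [hudef, dif_pos hs]
    rfl
  have hu_cont : ContinuousOn u (Set.Icc (0 : ℝ) r) := by
    rw [continuousOn_iff_continuous_restrict]
    have : (Set.Icc (0 : ℝ) r).domRestrict u = fun s => Ψ.curry s := funext fun s => dif_pos s.2
    rw [this]
    exact Ψ.curry.continuous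
  have hu_int : IntervalIntegrable u MeasureTheory.volume 0 r := by
    apply ContinuousOn.intervalIntegrable
    rwa [Set.uIcc_of_le hr0.le]
  set V : C(AddCircle (2 * π), ℝ) := ∫ s in (0 : ℝ)..r, u s with hVdef
  have hV_apply : ∀ x, V x = ∫ s in (0 : ℝ)..r, ‖deriv h ((s : ℂ) * ce x)‖ := by
    intro x
    have h1 : V x = ∫ s in (0 : ℝ)..r, u s x := by
      rw [hVdef, intervalIntegral.integral_of_le hr0.le, intervalIntegral.integral_of_le hr0.le]
      exact ContinuousMap.integral_apply hu_int.1 x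
    rw [h1]
    apply intervalIntegral.integral_congr
    intro s hs
    rw [Set.uIcc_of_le hr0.le] at hs
    exact hu_apply s hs x
  -- pointwise bound
  have hpt : ∀ x, ‖Fc x‖ ≤ (1 + k) * V x := by
    intro x
    have hce := norm_ce x
    have h1 : ‖h ((r : ℂ) * ce x)‖ ≤ ∫ s in (0 : ℝ)..r, ‖deriv h ((s : ℂ) * ce x)‖ :=
      ftc_ray_norm h hh hh0 (ce x) hce hr0.le hr1
    have h2 : ‖g ((r : ℂ) * ce x)‖ ≤ ∫ s in (0 : ℝ)..r, k * ‖deriv h ((s : ℂ) * ce x)‖ := by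
      refine (ftc_ray_norm g hg hg0 (ce x) hce hr0.le hr1).trans ?_
      apply intervalIntegral.integral_mono_on hr0.le
        (deriv_ray_intble g hDg (ce x) hce hr0.le hr1)
        ((deriv_ray_intble h hDh (ce x) hce hr0.le hr1).const_mul k)
      intro s hs
      exact hqc _ (hmemb s hs.1 (lt_of_le_of_lt hs.2 hr1) x)
    calc ‖Fc x‖ ≤ ‖h ((r : ℂ) * ce x)‖ + ‖(starRingEnd ℂ) (g ((r : ℂ) * ce x))‖ := norm_add_le _ _
    _ = ‖h ((r : ℂ) * ce x)‖ + ‖g ((r : ℂ) * ce x)‖ := by rw [RCLike.norm_conj]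
    _ ≤ (∫ s in (0 : ℝ)..r, ‖deriv h ((s : ℂ) * ce x)‖)
        + ∫ s in (0 : ℝ)..r, k * ‖deriv h ((s : ℂ) * ce x)‖ := add_le_add h1 h2
    _ = (1 + k) * V x := by
        rw [intervalIntegral.integral_const_mul, hV_apply x]; ring
  -- Lp norms
  have hnc : ‖(ContinuousMap.toLp q MeasureTheory.volume ℂ) Fc‖
      = (∫ x : AddCircle (2 * π), ‖Fc x‖ ^ p) ^ (1 / p) := by
    rw [Lp.norm_def, eLpNorm_congr_ae (ContinuousMap.coeFn_toLp (𝕜 := ℂ) (p := q) MeasureTheory.volume Fc),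
      hqdef, key_norm hp]
  have hnr : ∀ f : C(AddCircle (2 * π), ℝ), ‖(ContinuousMap.toLp q MeasureTheory.volume ℝ) f‖
      = (∫ x : AddCircle (2 * π), ‖f x‖ ^ p) ^ (1 / p) := fun f => by
    rw [Lp.norm_def, eLpNorm_congr_ae (ContinuousMap.coeFn_toLp (𝕜 := ℝ) (p := q) MeasureTheory.volume f),
      hqdef, key_norm hp]
  have hIntK : ∀ (w : AddCircle (2 * π) → ℝ), Continuous w →
      Integrable w (MeasureTheory.volume) := fun w hw =>
    integrableOn_univ.mp ((hw.continuousOn).integrableOn_compact isCompact_univ)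
  have step1 : ‖(ContinuousMap.toLp q MeasureTheory.volume ℂ) Fc‖
      ≤ ‖(ContinuousMap.toLp q MeasureTheory.volume ℝ) ((1 + k) • V)‖ := by
    rw [hnc, hnr]
    apply Real.rpow_le_rpow (integral_nonneg fun x => Real.rpow_nonneg (norm_nonneg _) _) _
      (by positivity)
    apply integral_mono (hIntK _ ((Fc.continuous.norm).rpow_const fun x => Or.inr hp0.le))
      (hIntK _ ((((1 + k) • V).continuous.norm).rpow_const fun x => Or.inr hp0.le))
    intro x
    apply Real.rpow_le_rpow (norm_nonneg _) _ hp0.le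
    refine (hpt x).trans ?_
    have hv : ((1 + k) • V) x = (1 + k) * V x := rfl
    rw [Real.norm_eq_abs, hv]
    exact le_abs_self _
  have step2 : ‖(ContinuousMap.toLp q MeasureTheory.volume ℝ) ((1 + k) • V)‖
      = (1 + k) * ‖(ContinuousMap.toLp q MeasureTheory.volume ℝ) V‖ := by
    rw [(ContinuousMap.toLp q MeasureTheory.volume ℝ).map_smul, norm_smul, Real.norm_eq_abs, _root_.abs_of_nonneg (by linarith)]
  have step3 : (ContinuousMap.toLp q MeasureTheory.volume ℝ) V
      = ∫ s in (0 : ℝ)..r, (ContinuousMap.toLp q MeasureTheory.volume ℝ) (u s) :=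
    ((ContinuousMap.toLp q MeasureTheory.volume ℝ).intervalIntegral_comp_comm hu_int).symm
  have step4 : ‖∫ s in (0 : ℝ)..r, (ContinuousMap.toLp q MeasureTheory.volume ℝ) (u s)‖
      ≤ ∫ s in (0 : ℝ)..r, ‖(ContinuousMap.toLp q MeasureTheory.volume ℝ) (u s)‖ :=
    intervalIntegral.norm_integral_le_integral_norm hr0.le
  set c₀ : ℝ := (1 / (2 * π)) ^ (1 / p) with hc₀def
  have hc0 : (0 : ℝ) ≤ c₀ := Real.rpow_nonneg (by positivity) _
  have hMpF : Mp p r (fun z => h z + (starRingEnd ℂ) (g z))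
      = c₀ * ‖(ContinuousMap.toLp q MeasureTheory.volume ℂ) Fc‖ := by
    rw [hnc]
    refine Mp_eq _ r Fc (fun θ => ?_)
    have : Fc ((θ : ℝ) : AddCircle (2 * π))
        = h ((r : ℂ) * Complex.exp ((θ : ℂ) * Complex.I))
          + (starRingEnd ℂ) (g ((r : ℂ) * Complex.exp ((θ : ℂ) * Complex.I))) := by
      rw [hFcdef]
      simp only [ContinuousMap.coe_mk]
      rw [ce_coe]
    rw [this]
  have hMps : ∀ s ∈ Set.uIcc (0 : ℝ) r,
      Mp p s (deriv h) = c₀ * ‖(ContinuousMap.toLp q MeasureTheory.volume ℝ) (u s)‖ := by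
    intro s hs
    rw [Set.uIcc_of_le hr0.le] at hs
    rw [hnr]
    refine Mp_eq (deriv h) s (u s) (fun θ => ?_)
    rw [hu_apply s hs, ce_coe, Real.norm_eq_abs, _root_.abs_of_nonneg (norm_nonneg _)]
  calc Mp p r (fun z => h z + (starRingEnd ℂ) (g z))
      = c₀ * ‖(ContinuousMap.toLp q MeasureTheory.volume ℂ) Fc‖ := hMpF
  _ ≤ c₀ * ((1 + k) * ∫ s in (0 : ℝ)..r,
        ‖(ContinuousMap.toLp q MeasureTheory.volume ℝ) (u s)‖) := by
      apply mul_le_mul_of_nonneg_left _ hc0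
      refine step1.trans ?_
      rw [step2]
      apply mul_le_mul_of_nonneg_left _ (by linarith : (0:ℝ) ≤ 1 + k)
      rw [step3]
      exact step4
  _ = (1 + k) * ∫ s in (0 : ℝ)..r,
        c₀ * ‖(ContinuousMap.toLp q MeasureTheory.volume ℝ) (u s)‖ := by
      rw [intervalIntegral.integral_const_mul]; ring
  _ = (1 + k) * ∫ s in (0 : ℝ)..r, Mp p s (deriv h) := by
      congr 1
      refine intervalIntegral.integral_congr fun s hs => ?_
      exact (hMps s hs).symm
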